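/- For the graph G_{t,ω} (t ≥ 2, ω ≥ 3), the local metric dimension of G_{t,ω} equals t(ω−2). -/

import Mathlib

open SimpleGraph

variable {V : Type*} [Fintype V] [DecidableEq V]

/-- `S` is a local resolving set of `G`. -/
def IsLocalResolving (G : SimpleGraph V) (S : Finset V) : Prop :=
  ∀ u v : V, G.Adj u v → u ∉ S → v ∉ S → ∃ w ∈ S, G.dist u w ≠ G.dist v w

/-- The local metric dimension of `G`. -/
noncomputable def dimL (G : SimpleGraph V) : ℕ :=
  sInf {k | ∃ S : Finset V, S.card = k ∧ IsLocalResolving G S}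

/-- `S` is a local adjacency resolving set of `G`. -/
def IsLocalAdjResolving (G : SimpleGraph V) (S : Finset V) : Prop :=
  ∀ u v : V, G.Adj u v → u ∉ S → v ∉ S → ∃ w ∈ S, Xor' (G.Adj w u) (G.Adj w v)

/-- The local adjacency metric dimension of `G`. -/
noncomputable def dimAL (G : SimpleGraph V) : ℕ :=
  sInf {k | ∃ S : Finset V, S.card = k ∧ IsLocalAdjResolving G S}

/-- `S` is a resolving set of `G`. -/
def IsResolving (G : SimpleGraph V) (S : Finset V) : Prop :=
  ∀ u v : V, u ≠ v → u ∉ S → v ∉ S → ∃ w ∈ S, G.dist u w ≠ G.dist v w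

/-- The metric dimension of `G`. -/
noncomputable def dimM (G : SimpleGraph V) : ℕ :=
  sInf {k | ∃ S : Finset V, S.card = k ∧ IsResolving G S}

/-- `S` is an adjacency resolving set of `G`. -/
def IsAdjResolving (G : SimpleGraph V) (S : Finset V) : Prop :=
  ∀ u v : V, u ≠ v → u ∉ S → v ∉ S → ∃ w ∈ S, Xor' (G.Adj w u) (G.Adj w v)

/-- The adjacency metric dimension of `G`. -/
noncomputable def dimA (G : SimpleGraph V) : ℕ :=
  sInf {k | ∃ S : Finset V, S.card = k ∧ IsAdjResolving G S}

/-- The graph obtained from `t` disjoint copies of `K_ω` by identifying one chosen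
vertex of each copy into a single vertex `none`. The vertex `some (i, j)` is the
`j`-th non-hub vertex of the `i`-th copy. -/
def Gtw (t ω : ℕ) : SimpleGraph (Option (Fin t × Fin (ω - 1))) where
  Adj a b := a ≠ b ∧ ∀ p q, a = some p → b = some q → p.1 = q.1
  symm := by
    constructor
    rintro a b ⟨h1, h2⟩
    exact ⟨h1.symm, fun p q hp hq => (h2 q p hq hp).symm⟩
  loopless := by
    constructor
    rintro a ⟨h, -⟩
    exact h rfl


open SimpleGraph Finset

section
variable {t ω : ℕ}

lemma gtw_adj_none_some (p : Fin t × Fin (ω-1)) : (Gtw t ω).Adj none (some p) :=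
  ⟨by simp, by simp⟩

lemma gtw_adj_some_some {p q : Fin t × Fin (ω-1)} (h : p ≠ q) (h1 : p.1 = q.1) :
    (Gtw t ω).Adj (some p) (some q) :=
  ⟨by simpa using h, fun a b ha hb => by
    obtain rfl := Option.some.inj ha; obtain rfl := Option.some.inj hb; exact h1⟩

lemma gtw_not_adj {p q : Fin t × Fin (ω-1)} (h1 : p.1 ≠ q.1) :
    ¬ (Gtw t ω).Adj (some p) (some q) := fun ⟨_, h⟩ => h1 (h p q rfl rfl)

lemma gtw_dist_none_some (p : Fin t × Fin (ω-1)) : (Gtw t ω).dist none (some p) = 1 :=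
  SimpleGraph.dist_eq_one_iff_adj.mpr (gtw_adj_none_some p)

lemma gtw_dist_some_none (p : Fin t × Fin (ω-1)) : (Gtw t ω).dist (some p) none = 1 :=
  SimpleGraph.dist_eq_one_iff_adj.mpr (gtw_adj_none_some p).symm

lemma gtw_dist_same {p q : Fin t × Fin (ω-1)} (h : p ≠ q) (h1 : p.1 = q.1) :
    (Gtw t ω).dist (some p) (some q) = 1 :=
  SimpleGraph.dist_eq_one_iff_adj.mpr (gtw_adj_some_some h h1)

lemma gtw_dist_diff {p q : Fin t × Fin (ω-1)} (h1 : p.1 ≠ q.1) :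
    (Gtw t ω).dist (some p) (some q) = 2 := by
  let w : (Gtw t ω).Walk (some p) (some q) :=
    Walk.cons (gtw_adj_none_some p).symm (Walk.cons (gtw_adj_none_some q) Walk.nil)
  have hle : (Gtw t ω).dist (some p) (some q) ≤ 2 := SimpleGraph.dist_le w
  have hne : (Gtw t ω).dist (some p) (some q) ≠ 1 :=
    fun hh => gtw_not_adj h1 (SimpleGraph.dist_eq_one_iff_adj.mp hh)
  have hpos : 0 < (Gtw t ω).dist (some p) (some q) :=
    (w.reachable).pos_dist_of_ne (by simp [Prod.ext_iff]; intro h; exact absurd h h1)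
  omega

end
theorem dimL_Gtw (t ω : ℕ) (ht : 2 ≤ t) (hω : 3 ≤ ω) :
    dimL (Gtw t ω) = t * (ω - 2) := by
  have h1 : 0 < ω - 1 := by omega
  have h2 : 1 < ω - 1 := by omega
  set z : Fin (ω-1) := ⟨0, h1⟩ with hz
  set o : Fin (ω-1) := ⟨1, h2⟩ with ho
  set S : Finset (Option (Fin t × Fin (ω-1))) :=
    (Finset.univ.filter (fun p : Fin t × Fin (ω-1) => p.2 ≠ z)).map
      ⟨some, Option.some_injective _⟩ with hS
  have hmemS : ∀ p : Fin t × Fin (ω-1), some p ∈ S ↔ p.2 ≠ z := by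
    intro p; simp [hS]
  have hcard : S.card = t * (ω - 2) := by
    rw [hS, Finset.card_map]
    have he : (Finset.univ.filter (fun p : Fin t × Fin (ω-1) => p.2 ≠ z))
        = Finset.univ ×ˢ (Finset.univ.erase z) := by
      ext p
      simp [Finset.mem_product, eq_comm]
    rw [he, Finset.card_product, Finset.card_erase_of_mem (Finset.mem_univ _)]
    simp only [Finset.card_univ, Fintype.card_fin]
    have : ω - 1 - 1 = ω - 2 := by omega
    rw [this]
  have hres : IsLocalResolving (Gtw t ω) S := by
    rintro (_|p) (_|q) hadj hu hv
    · exact absurd rfl hadj.1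
    · have hq : q.2 = z := by by_contra h; exact hv ((hmemS q).mpr h)
      obtain ⟨i', hi'⟩ := Fintype.exists_ne_of_one_lt_card
        (by rw [Fintype.card_fin]; omega) q.1
      refine ⟨some (i', o), (hmemS _).mpr (by simp [ho, hz, Fin.ext_iff]), ?_⟩
      rw [gtw_dist_none_some, gtw_dist_diff (show q.1 ≠ i' from fun h => hi' h.symm)]
      omega
    · have hp : p.2 = z := by by_contra h; exact hu ((hmemS p).mpr h)
      obtain ⟨i', hi'⟩ := Fintype.exists_ne_of_one_lt_card
        (by rw [Fintype.card_fin]; omega) p.1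
      refine ⟨some (i', o), (hmemS _).mpr (by simp [ho, hz, Fin.ext_iff]), ?_⟩
      rw [gtw_dist_none_some, gtw_dist_diff (show p.1 ≠ i' from fun h => hi' h.symm)]
      omega
    · have hp : p.2 = z := by by_contra h; exact hu ((hmemS p).mpr h)
      have hq : q.2 = z := by by_contra h; exact hv ((hmemS q).mpr h)
      have hfst : p.1 = q.1 := hadj.2 p q rfl rfl
      have hpq : p = q := by rw [Prod.ext_iff]; exact ⟨hfst, hp.trans hq.symm⟩
      exact absurd rfl (hpq ▸ hadj.1)
  have hlb : ∀ k ∈ {k | ∃ S : Finset (Option (Fin t × Fin (ω-1))),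
      S.card = k ∧ IsLocalResolving (Gtw t ω) S}, t * (ω - 2) ≤ k := by
    rintro k ⟨T, rfl, hT⟩
    have key : ∀ i : Fin t,
        ((Finset.univ : Finset (Fin (ω-1))).filter (fun j => some (i,j) ∉ T)).card ≤ 1 := by
      intro i
      rw [Finset.card_le_one]
      intro j hj j' hj'
      simp only [Finset.mem_filter, Finset.mem_univ, true_and] at hj hj'
      by_contra hne
      obtain ⟨w, hwT, hwd⟩ := hT (some (i,j)) (some (i,j'))
        (gtw_adj_some_some (by simp [Prod.ext_iff]; exact hne) rfl) hj hj'
      match w with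
      | none =>
        rw [gtw_dist_some_none, gtw_dist_some_none] at hwd; exact hwd rfl
      | some (i'', j'') =>
        by_cases hii : i = i''
        · subst hii
          have hne1 : (i, j) ≠ (i, j'') := fun h => hj (h ▸ hwT)
          have hne2 : (i, j') ≠ (i, j'') := fun h => hj' (h ▸ hwT)
          rw [gtw_dist_same hne1 rfl, gtw_dist_same hne2 rfl] at hwd
          exact hwd rfl
        · rw [gtw_dist_diff (show (i,j).1 ≠ (i'',j'').1 from hii),
            gtw_dist_diff (show (i,j').1 ≠ (i'',j'').1 from hii)] at hwd
          exact hwd rfl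
    have hsub : ∀ i : Fin t, ω - 2 ≤
        ((Finset.univ : Finset (Fin (ω-1))).filter (fun j => some (i,j) ∈ T)).card := by
      intro i
      have hpn := Finset.card_filter_add_card_filter_not
        (s := (Finset.univ : Finset (Fin (ω-1)))) (p := fun j => some (i,j) ∈ T)
      have hk := key i
      have hcu : (Finset.univ : Finset (Fin (ω-1))).card = ω - 1 := by simp
      omega
    set A : Fin t → Finset (Option (Fin t × Fin (ω-1))) :=
      fun i => (Finset.univ.filter (fun j => some (i,j) ∈ T)).map
        ⟨fun j => some (i, j), fun a b h => by simpa [Prod.ext_iff] using h⟩ with hA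
    have hAsub : ∀ i, A i ⊆ T := by
      intro i x hx
      simp only [hA, Finset.mem_map, Finset.mem_filter, Finset.mem_univ, true_and,
        Function.Embedding.coeFn_mk] at hx
      obtain ⟨j, hj, rfl⟩ := hx
      exact hj
    have hdisj : ∀ i ∈ Finset.univ, ∀ i' ∈ Finset.univ, i ≠ i' → Disjoint (A i) (A i') := by
      intro i _ i' _ hne
      rw [Finset.disjoint_left]
      intro x hx hx'
      simp only [hA, Finset.mem_map, Finset.mem_filter, Finset.mem_univ, true_and,
        Function.Embedding.coeFn_mk] at hx hx'
      obtain ⟨j, _, rfl⟩ := hx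
      obtain ⟨j', _, hj'⟩ := hx'
      have hji := Option.some.inj hj'
      exact hne (congrArg Prod.fst hji).symm
    calc t * (ω - 2) = ∑ _i : Fin t, (ω - 2) := by
          rw [Finset.sum_const, Finset.card_univ, Fintype.card_fin, smul_eq_mul]
      _ ≤ ∑ i : Fin t, (A i).card :=
          Finset.sum_le_sum (fun i _ => by rw [hA]; simpa using hsub i)
      _ = (Finset.univ.biUnion A).card := (Finset.card_biUnion hdisj).symm
      _ ≤ T.card := Finset.card_le_card (Finset.biUnion_subset.mpr fun i _ => hAsub i)
  unfold dimL
  exact le_antisymm (Nat.sInf_le ⟨S, hcard, hres⟩)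
    (le_csInf ⟨t * (ω - 2), S, hcard, hres⟩ hlb)
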